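/- A round i is preserving with respect to a phase predicate ψ if and only if there is a tuple f with ? ∉ set(f) such that ? ∈ fire_i(f,ψ). Moreover, if round i is solo-safe with respect to ψ and solo →[ψ↾_i]_i f, then f = solo. -/

import Mathlib

open Classical

namespace HO

/-! ### Values

`none` is the undefined value `?`; defined values are natural numbers, where
`some 0` plays the role of `a` and `some 1` the role of `b` (so `a < b`). -/

abbrev Val := Option ℕ

def aVal : ℕ := 0
def bVal : ℕ := 1

/-! ### Operations -/

inductive Op where
  | min : Op
  | smor : Op

/-- Minimum of a multiset of defined values (`none` if the multiset is empty). -/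
noncomputable def msMin (S : Multiset ℕ) : Option ℕ :=
  if h : S.toFinset.Nonempty then some (S.toFinset.min' h) else none

/-- Smallest most frequent value of a multiset (`none` if the multiset is empty). -/
noncomputable def msSmor (S : Multiset ℕ) : Option ℕ :=
  if h : (S.toFinset.filter fun v => ∀ w ∈ S.toFinset, S.count w ≤ S.count v).Nonempty
  then some ((S.toFinset.filter fun v => ∀ w ∈ S.toFinset, S.count w ≤ S.count v).min' h)
  else none

noncomputable def Op.apply : Op → Multiset ℕ → Option ℕ
  | Op.min, S => msMin S
  | Op.smor, S => msSmor S

/-! ### Rounds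

A round consists of at most one `uni` instruction followed by a list of `mult`
instructions with non-increasing thresholds, all thresholds lying in `[0,1)`. -/

structure Round where
  uniThr : Option ℝ
  mults : List (ℝ × Op)
  wfU : ∀ t ∈ uniThr, 0 ≤ t ∧ t < 1
  wfM : ∀ q ∈ mults, 0 ≤ q.1 ∧ q.1 < 1
  sorted : (mults.map Prod.fst).Chain' (· ≥ ·)

def Round.hasUni (R : Round) : Prop := R.uniThr.isSome = true
def Round.hasMult (R : Round) : Prop := R.mults ≠ []

/-- `thr_u^i`: the threshold of the uni instruction, `-1` if absent. -/
noncomputable def Round.thrU (R : Round) : ℝ := R.uniThr.getD (-1)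

noncomputable def minThr : List ℝ → ℝ
  | [] => -1
  | [t] => t
  | t :: ts => min t (minThr ts)

/-- `thr_m^{i,k}`: the smallest threshold of a mult instruction, `-1` if absent. -/
noncomputable def Round.thrM (R : Round) : ℝ := minThr (R.mults.map Prod.fst)

/-- Result of the first applicable `mult` instruction. -/
noncomputable def firstMult (n : ℕ) (S : Multiset ℕ) : List (ℝ × Op) → Option ℕ
  | [] => none
  | (t, op) :: rest =>
      if 1 < S.toFinset.card ∧ t * n < (S.card : ℝ) then op.apply S
      else firstMult n S rest

/-- `update_i(H)`: the result of the first instruction of the round whose condition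
is satisfied by `H − {?}`, and `?` (i.e. `none`) if no condition applies. -/
noncomputable def Round.update (R : Round) (n : ℕ) (H : Multiset Val) : Option ℕ :=
  if ∃ t ∈ R.uniThr,
      (H.filterMap id).toFinset.card = 1 ∧ t * n < ((H.filterMap id).card : ℝ)
  then msMin (H.filterMap id)
  else firstMult n (H.filterMap id) R.mults

/-! ### Communication predicates for a round -/

/-- A conjunction of atomic communication predicates for one round: possibly
`φ_=` (field `eq`) and possibly `φ_thr` (field `thr`, with `0 ≤ thr < 1`). -/
structure RoundPred where
  eq : Bool
  thr : Option ℝ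
  wf : ∀ t ∈ thr, 0 ≤ t ∧ t < 1

/-- `thr_i(ψ)`: the threshold appearing in the predicate, `-1` if absent. -/
noncomputable def RoundPred.thrVal (φ : RoundPred) : ℝ := φ.thr.getD (-1)

def RoundPred.isEqualizer (φ : RoundPred) : Prop := φ.eq = true

/-- Satisfaction of a round predicate by a tuple of heard-of multisets. -/
def RoundPred.sat {α : Type} (φ : RoundPred) (n : ℕ) (Hs : Fin n → Multiset α) : Prop :=
  (φ.eq = true → ∀ p q, Hs p = Hs q) ∧
  ∀ t ∈ φ.thr, ∀ p, t * n < ((Hs p).card : ℝ)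

/-- Logical implication between round predicates. -/
def RoundPred.implies (φ φ' : RoundPred) : Prop :=
  ∀ (α : Type) (n : ℕ) (Hs : Fin n → Multiset α), φ.sat n Hs → φ'.sat n Hs

/-! ### Tuples of values -/

/-- The multiset of values of a tuple. -/
def msetOf {n : ℕ} (f : Fin n → Val) : Multiset Val := Finset.univ.val.map f

def soloB (n : ℕ) : Fin n → Val := fun _ => some bVal
def soloA (n : ℕ) : Fin n → Val := fun _ => some aVal
def soloQ (n : ℕ) : Fin n → Val := fun _ => none

/-- `bias(θ)`: a tuple over `{a,b}` with `θ·n` entries equal to `b`. -/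
def isBias {n : ℕ} (θ : ℝ) (f : Fin n → Val) : Prop :=
  (∀ p, f p = some aVal ∨ f p = some bVal) ∧
  ((Finset.univ.filter fun p => f p = some bVal).card : ℝ) = θ * n

/-- `spread = bias(1/2)`. -/
def isSpread {n : ℕ} (f : Fin n → Val) : Prop := isBias (1/2) f

/-- `bias^?(θ)`: a tuple over `{?,b}` with `θ·n` entries equal to `b`. -/
def isBiasQ {n : ℕ} (θ : ℝ) (f : Fin n → Val) : Prop :=
  (∀ p, f p = none ∨ f p = some bVal) ∧
  ((Finset.univ.filter fun p => f p = some bVal).card : ℝ) = θ * n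

/-- `bias_a^?(θ)`: a tuple over `{?,a}` with `θ·n` entries equal to `a`. -/
def isBiasQa {n : ℕ} (θ : ℝ) (f : Fin n → Val) : Prop :=
  (∀ p, f p = none ∨ f p = some aVal) ∧
  ((Finset.univ.filter fun p => f p = some aVal).card : ℝ) = θ * n

/-! ### Round transitions -/

/-- Round transition `f →[φ]_i f'`: every process receives a sub-multiset of the
multiset of sent values, the tuple of heard-of multisets jointly satisfies `φ`,
and every process updates its variable accordingly. -/
def roundTrans (R : Round) (φ : RoundPred) {n : ℕ} (f f' : Fin n → Val) : Prop :=
  ∃ Hs : Fin n → Multiset Val,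
    (∀ p, Hs p ≤ msetOf f) ∧ φ.sat n Hs ∧ ∀ p, f' p = R.update n (Hs p)

/-- `d ∈ fire_i(f,φ)`. -/
def fire (R : Round) (φ : RoundPred) {n : ℕ} (f : Fin n → Val) (d : Val) : Prop :=
  ∃ f' : Fin n → Val, roundTrans R φ f f' ∧ ∃ p, f' p = d

/-! ### Algorithms -/

/-- An algorithm of the core language: rounds `1,…,r` (`r ≥ 2`), with a designated
input-update round `ir` (`1 ≤ ir < r`). -/
structure Algo where
  r : ℕ
  rounds : ℕ → Round
  ir : ℕ
  two_le_r : 2 ≤ r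
  one_le_ir : 1 ≤ ir
  ir_lt_r : ir < r

noncomputable def Algo.thrU (A : Algo) (i : ℕ) : ℝ := (A.rounds i).thrU
noncomputable def Algo.thrM (A : Algo) (i : ℕ) : ℝ := (A.rounds i).thrM
def Algo.hasUni (A : Algo) (i : ℕ) : Prop := (A.rounds i).hasUni
def Algo.hasMult (A : Algo) (i : ℕ) : Prop := (A.rounds i).hasMult

/-- A phase predicate: a conjunction of atomic predicates for every round. -/
abbrev PhasePred := ℕ → RoundPred

/-- Phase transition `(f,d) →ψ (f',d')`. -/
def phaseTrans (A : Algo) (ψ : PhasePred) {n : ℕ} (f d f' d' : Fin n → Val) : Prop :=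
  ∃ g : ℕ → Fin n → Val,
    g 0 = f ∧
    (∀ i, 1 ≤ i → i ≤ A.r → roundTrans (A.rounds i) (ψ i) (g (i - 1)) (g i)) ∧
    (∀ p, f' p = if g A.ir p = none then f p else g A.ir p) ∧
    (∀ p, d' p = if d p = none then g A.r p else d p)

/-- A chain of round transitions for rounds `k,…,l`. -/
def roundChain (A : Algo) (ψ : PhasePred) (k l : ℕ) {n : ℕ} (f f' : Fin n → Val) : Prop :=
  ∃ g : ℕ → Fin n → Val,
    g (k - 1) = f ∧ g l = f' ∧
    ∀ i, k ≤ i → i ≤ l → roundTrans (A.rounds i) (ψ i) (g (i - 1)) (g i)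

/-! ### Syntactic notions -/

/-- Round `i` is preserving w.r.t. `ψ`. -/
def Algo.preserving (A : Algo) (ψ : PhasePred) (i : ℕ) : Prop :=
  ¬ A.hasUni i ∨ ¬ A.hasMult i ∨ (ψ i).thrVal < max (A.thrU i) (A.thrM i)

/-- Round `i` is solo-safe w.r.t. `ψ`. -/
def Algo.soloSafe (A : Algo) (ψ : PhasePred) (i : ℕ) : Prop :=
  0 ≤ A.thrU i ∧ A.thrU i ≤ (ψ i).thrVal

/-- The border threshold `thr̄ = max(1 − thr_u^1, 1 − thr_m^{1,k}/2)`. -/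
noncomputable def Algo.borderThr (A : Algo) : ℝ :=
  max (1 - A.thrU 1) (1 - A.thrM 1 / 2)

/-- `ψ` is a decider: all rounds are solo-safe w.r.t. `ψ`. -/
def Algo.decider (A : Algo) (ψ : PhasePred) : Prop :=
  ∀ i, 1 ≤ i → i ≤ A.r → A.soloSafe ψ i

/-- `ψ` is a unifier. -/
def Algo.unifier (A : Algo) (ψ : PhasePred) : Prop :=
  A.thrM 1 ≤ (ψ 1).thrVal ∧
  (A.thrU 1 ≤ (ψ 1).thrVal ∨ A.borderThr ≤ (ψ 1).thrVal) ∧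
  ∃ i, 1 ≤ i ∧ i ≤ A.ir ∧ (ψ i).isEqualizer ∧
    (∀ j, 2 ≤ j → j ≤ i → ¬ A.preserving ψ j) ∧
    (∀ j, i < j → j ≤ A.ir → A.soloSafe ψ j)

/-- The algorithm is syntactically safe. -/
def Algo.syntSafe (A : Algo) : Prop :=
  A.hasMult 1 ∧
  (∀ i, 1 ≤ i → i ≤ A.r → A.hasUni i) ∧
  (∀ q ∈ (A.rounds 1).mults, q.2 = Op.smor) ∧
  1 - A.thrU (A.ir + 1) ≤ A.thrM 1 / 2 ∧
  1 - A.thrU (A.ir + 1) ≤ A.thrU 1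

/-- Assumption (A) relative to the global predicate `gl`. -/
def Algo.assumptionA (A : Algo) (gl : PhasePred) : Prop :=
  ∀ i, 1 ≤ i → i ≤ A.r →
    (∀ j, 1 ≤ j → j < i → ¬ A.preserving gl j) →
    (A.hasUni i → (gl i).thrVal ≤ A.thrU i) ∧
    (A.hasMult i → (gl i).thrVal ≤ A.thrM i)

/-- Proviso (P): the global predicate has no equalizer and round `ir+1` has no
mult instruction. -/
def Algo.provisoP (A : Algo) (gl : PhasePred) : Prop :=
  (∀ i, 1 ≤ i → i ≤ A.r → ¬ (gl i).isEqualizer) ∧ ¬ A.hasMult (A.ir + 1)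

/-- Removing all mult instructions of a round. -/
def Round.dropMults (R : Round) : Round :=
  { uniThr := R.uniThr, mults := [], wfU := R.wfU,
    wfM := by simp, sorted := by first | exact List.chain'_nil | exact List.IsChain.nil | constructor }

/-- Removing all mult instructions of round `i` of an algorithm. -/
def Algo.dropMultsAt (A : Algo) (i : ℕ) : Algo :=
  { A with rounds := fun j => if j = i then (A.rounds j).dropMults else A.rounds j }

/-! ### Communication predicates, executions, consensus -/

/-- A communication predicate `(G ψ̄) ∧ F(ψ^1 ∧ F(ψ^2 ∧ … ∧ F ψ^k))`:
a global phase predicate and sporadic phase predicates `ψ^1,…,ψ^k`. -/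
structure CommPred where
  glob : PhasePred
  k : ℕ
  spor : ℕ → PhasePred

/-- Roundwise implication between phase predicates of an algorithm. -/
def predImplies (A : Algo) (ψ ψ' : PhasePred) : Prop :=
  ∀ i, 1 ≤ i → i ≤ A.r → (ψ i).implies (ψ' i)

/-- An execution of an algorithm respecting a communication predicate: an infinite
sequence of phase transitions under the global predicate, together with an
increasing sequence of times at which the sporadic predicates hold. -/
structure Exec (A : Algo) (C : CommPred) (n : ℕ) where
  inp : ℕ → Fin n → Val
  dec : ℕ → Fin n → Val
  inp0 : ∀ p, inp 0 p ≠ none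
  dec0 : ∀ p, dec 0 p = none
  step : ∀ s, phaseTrans A C.glob (inp s) (dec s) (inp (s + 1)) (dec (s + 1))
  sporTime : ℕ → ℕ
  mono : StrictMono sporTime
  sporStep : ∀ i, 1 ≤ i → i ≤ C.k →
    phaseTrans A (C.spor i) (inp (sporTime i)) (dec (sporTime i))
      (inp (sporTime i + 1)) (dec (sporTime i + 1))

/-- Agreement: in every reachable state, any two non-`?` decision values coincide. -/
def Agreement (A : Algo) (C : CommPred) : Prop :=
  ∀ n, 0 < n → ∀ E : Exec A C n, ∀ s p q v w,
    E.dec s p = some v → E.dec s q = some w → v = w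

/-- Termination: every execution reaches a state where all processes have decided. -/
def Termination (A : Algo) (C : CommPred) : Prop :=
  ∀ n, 0 < n → ∀ E : Exec A C n, ∃ s, ∀ p, E.dec s p ≠ none

/-- Solving consensus: agreement and termination. -/
def SolvesConsensus (A : Algo) (C : CommPred) : Prop :=
  Agreement A C ∧ Termination A C

/-! ### Auxiliary lemmas -/

lemma filterMap_id_map_some (s : Multiset ℕ) :
    (s.map (some : ℕ → Val)).filterMap id = s := by
  rw [Multiset.filterMap_map]
  have : (id ∘ (some : ℕ → Val)) = some ∘ (id : ℕ → ℕ) := rfl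
  rw [this, Multiset.filterMap_eq_map, Multiset.map_id]

lemma filterMap_id_replicate (m v : ℕ) :
    ((Multiset.replicate m (some v) : Multiset Val)).filterMap id
      = Multiset.replicate m v := by
  rw [← Multiset.map_replicate, filterMap_id_map_some]

lemma card_filterMap_id (M : Multiset Val) (h : ∀ x ∈ M, x ≠ none) :
    (M.filterMap id).card = M.card := by
  induction M using Multiset.induction with
  | empty => simp
  | cons a s ih =>
    cases a with
    | none => exact absurd rfl (h none (Multiset.mem_cons_self _ _))
    | some v =>
      rw [Multiset.filterMap_cons_some (f := id) _ _ rfl, Multiset.card_cons, Multiset.card_cons,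
        ih fun x hx => h x (Multiset.mem_cons_of_mem hx)]

lemma msMin_isSome {S : Multiset ℕ} (h : S ≠ 0) : ∃ v, msMin S = some v := by
  have hne : S.toFinset.Nonempty := Multiset.toFinset_nonempty.2 h
  exact ⟨_, dif_pos hne⟩

lemma msSmor_isSome {S : Multiset ℕ} (h : S ≠ 0) : ∃ v, msSmor S = some v := by
  have hne : S.toFinset.Nonempty := Multiset.toFinset_nonempty.2 h
  obtain ⟨x, hx, hmax⟩ := S.toFinset.exists_max_image S.count hne
  have hfil : (S.toFinset.filter fun v => ∀ w ∈ S.toFinset, S.count w ≤ S.count v).Nonempty :=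
    ⟨x, Finset.mem_filter.2 ⟨hx, hmax⟩⟩
  exact ⟨_, dif_pos hfil⟩

lemma Op.apply_isSome (op : Op) {S : Multiset ℕ} (h : S ≠ 0) : ∃ v, op.apply S = some v := by
  cases op with
  | min => exact msMin_isSome h
  | smor => exact msSmor_isSome h

lemma minThr_cons (t : ℝ) (ts : List ℝ) (h : ts ≠ []) :
    minThr (t :: ts) = min t (minThr ts) := by
  cases ts with
  | nil => exact absurd rfl h
  | cons a l => rfl

lemma minThr_mem : ∀ (L : List ℝ), L ≠ [] → minThr L ∈ L := by
  intro L
  induction L with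
  | nil => intro h; exact absurd rfl h
  | cons t ts ih =>
    intro _
    cases ts with
    | nil => simp [minThr]
    | cons a l =>
      rw [minThr_cons _ _ (by simp)]
      rcases le_total t (minThr (a :: l)) with h | h
      · rw [min_eq_left h]; exact List.mem_cons_self
      · rw [min_eq_right h]; exact List.mem_cons_of_mem _ (ih (by simp))

lemma minThr_le_of_mem : ∀ (L : List ℝ), ∀ t ∈ L, minThr L ≤ t := by
  intro L
  induction L with
  | nil => intro t ht; simp at ht
  | cons u ts ih =>
    intro t ht
    cases ts with
    | nil =>
      rcases List.mem_cons.1 ht with rfl | h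
      · exact le_refl _
      · simp at h
    | cons a l =>
      rw [minThr_cons _ _ (by simp)]
      rcases List.mem_cons.1 ht with rfl | h
      · exact min_le_left _ _
      · exact le_trans (min_le_right _ _) (ih t h)

lemma firstMult_eq_none (n : ℕ) (S : Multiset ℕ) :
    ∀ (L : List (ℝ × Op)),
    (∀ q ∈ L, ¬(1 < S.toFinset.card ∧ q.1 * n < (S.card : ℝ))) →
    firstMult n S L = none := by
  intro L
  induction L with
  | nil => intro _; rfl
  | cons q L ih =>
    intro h
    obtain ⟨t, op⟩ := q
    rw [firstMult, if_neg (h _ List.mem_cons_self)]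
    exact ih fun q hq => h q (List.mem_cons_of_mem _ hq)

lemma firstMult_isSome (n : ℕ) (S : Multiset ℕ) (hS : S ≠ 0)
    (hc : 1 < S.toFinset.card) :
    ∀ (L : List (ℝ × Op)),
    (∃ q ∈ L, q.1 * n < (S.card : ℝ)) → ∃ v, firstMult n S L = some v := by
  intro L
  induction L with
  | nil => intro h; simp at h
  | cons q L ih =>
    intro h
    obtain ⟨t, op⟩ := q
    rw [firstMult]
    by_cases hcond : 1 < S.toFinset.card ∧ t * n < (S.card : ℝ)
    · rw [if_pos hcond]; exact op.apply_isSome hS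
    · rw [if_neg hcond]
      apply ih
      obtain ⟨q, hq, hlt⟩ := h
      rcases List.mem_cons.1 hq with rfl | hq'
      · exact absurd ⟨hc, hlt⟩ hcond
      · exact ⟨q, hq', hlt⟩

lemma update_eq_none (R : Round) (n : ℕ) (H : Multiset Val)
    (hu : ¬ ∃ t ∈ R.uniThr,
      (H.filterMap id).toFinset.card = 1 ∧ t * n < ((H.filterMap id).card : ℝ))
    (hm : ∀ q ∈ R.mults,
      ¬(1 < (H.filterMap id).toFinset.card ∧ q.1 * n < ((H.filterMap id).card : ℝ))) :
    R.update n H = none := by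
  rw [Round.update, if_neg hu, firstMult_eq_none _ _ _ hm]

lemma fire_none_of (R : Round) (φ : RoundPred) {n : ℕ} (hn : 0 < n) (f : Fin n → Val)
    (H : Multiset Val) (hle : H ≤ msetOf f)
    (hthr : ∀ t ∈ φ.thr, t * n < (H.card : ℝ))
    (hupd : R.update n H = none) :
    fire R φ f none :=
  ⟨fun _ => none,
    ⟨fun _ => H, fun _ => hle, ⟨fun _ _ _ => rfl, fun t ht _ => hthr t ht⟩,
      fun _ => hupd.symm⟩, ⟨⟨0, hn⟩, rfl⟩⟩

lemma msetOf_soloB (n : ℕ) : msetOf (soloB n) = Multiset.replicate n (some bVal) := by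
  show Multiset.map (fun _ => some bVal) _ = _
  rw [Multiset.map_const']
  congr 1
  simpa using Finset.card_univ (α := Fin n)

lemma msetOf_valMap (n : ℕ) :
    msetOf (fun p : Fin n => (some p.val : Val)) = (Finset.range n).val.map some := by
  show Multiset.map _ _ = _
  have h1 : ((Finset.univ : Finset (Fin n)).val.map Fin.val : Multiset ℕ)
      = (Finset.range n).val := by
    rw [← Nat.Iio_eq_range, ← Fin.map_valEmbedding_univ]; rfl
  calc Multiset.map (fun p : Fin n => (some p.val : Val)) Finset.univ.val
      = Multiset.map some (Multiset.map Fin.val Finset.univ.val) := by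
        rw [Multiset.map_map]; rfl
    _ = (Finset.range n).val.map some := by rw [h1]

lemma msMin_replicate (k v : ℕ) (hk : k ≠ 0) :
    msMin (Multiset.replicate k v) = some v := by
  have ht : (Multiset.replicate k v).toFinset = {v} := by
    rw [Multiset.toFinset_replicate, if_neg hk]
  simp [msMin, ht]

lemma update_zero (R : Round) (n : ℕ) : R.update n 0 = none := by
  apply update_eq_none <;> simp

lemma update_replicate_none (R : Round) (n m v : ℕ)
    (hu : ∀ t ∈ R.uniThr, ¬ t * n < (m : ℝ)) :
    R.update n (Multiset.replicate m (some v)) = none := by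
  apply update_eq_none
  · rintro ⟨t, ht, _, hlt⟩
    rw [filterMap_id_replicate, Multiset.card_replicate] at hlt
    exact hu t ht hlt
  · intro q _
    rw [filterMap_id_replicate]
    rintro ⟨hcard, -⟩
    have : (Multiset.replicate m v).toFinset.card ≤ 1 := by
      rcases Nat.eq_zero_or_pos m with rfl | hm
      · simp
      · rw [Multiset.toFinset_replicate, if_neg hm.ne']; simp
    omega

lemma update_replicate_some (R : Round) (n m v : ℕ) (t : ℝ)
    (hu : R.uniThr = some t) (hm : 0 < m) (ht : t * n < (m : ℝ)) :
    R.update n (Multiset.replicate m (some v)) = some v := by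
  have hcond : ∃ u ∈ R.uniThr,
      (((Multiset.replicate m (some v) : Multiset Val)).filterMap id).toFinset.card = 1 ∧
      u * n < ((((Multiset.replicate m (some v) : Multiset Val)).filterMap id).card : ℝ) := by
    refine ⟨t, by simp [hu], ?_, ?_⟩
    · rw [filterMap_id_replicate, Multiset.toFinset_replicate, if_neg hm.ne']; simp
    · rw [filterMap_id_replicate, Multiset.card_replicate]; exact ht
  rw [Round.update, if_pos hcond, filterMap_id_replicate, msMin_replicate _ _ hm.ne']

lemma update_range_none (R : Round) (n m : ℕ) (hm : 2 ≤ m)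
    (hmult : ∀ q ∈ R.mults, ¬ q.1 * n < (m : ℝ)) :
    R.update n ((Finset.range m).val.map some) = none := by
  apply update_eq_none
  · rintro ⟨t, _, hcard, -⟩
    rw [filterMap_id_map_some, Finset.val_toFinset, Finset.card_range] at hcard
    omega
  · intro q hq
    rw [filterMap_id_map_some]
    rintro ⟨-, hlt⟩
    have hc : Multiset.card (Finset.range m).val = m := Finset.card_range m
    rw [hc] at hlt
    exact hmult q hq hlt

lemma RoundPred.thr_eq_some {φ : RoundPred} (h : 0 ≤ φ.thrVal) : φ.thr = some φ.thrVal := by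
  cases hc : φ.thr with
  | none => exfalso; rw [RoundPred.thrVal, hc] at h; norm_num at h
  | some s => simp only [RoundPred.thrVal, hc, Option.getD_some]

lemma Round.uniThr_eq_some {R : Round} (h : 0 ≤ R.thrU) : R.uniThr = some R.thrU := by
  cases hc : R.uniThr with
  | none => exfalso; rw [Round.thrU, hc] at h; norm_num at h
  | some t => simp only [Round.thrU, hc, Option.getD_some]

/-- Lemma 1.  A round `i` is preserving w.r.t. `ψ` iff there is
a `?`-free tuple `f` with `? ∈ fire_i(f,ψ)`; and if round `i` is solo-safe
w.r.t. `ψ` then the only round transition from `solo` leads to `solo`. -/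
theorem preserving_iff_fires_undef (A : Algo) (ψ : PhasePred) (i : ℕ)
    (hi : 1 ≤ i) (hir : i ≤ A.r) :
    (A.preserving ψ i ↔
      ∃ (n : ℕ) (f : Fin n → Val), 0 < n ∧ (∀ p, f p ≠ none) ∧
        fire (A.rounds i) (ψ i) f none) ∧
    (A.soloSafe ψ i →
      ∀ (n : ℕ) (f : Fin n → Val),
        roundTrans (A.rounds i) (ψ i) (soloB n) f → f = soloB n) := by
  constructor
  · constructor
    · -- forward direction of the iff
      intro hpres
      rcases hψ : (ψ i).thr with _ | s
      · -- no threshold in the predicate: the empty heard-of multiset works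
        refine ⟨1, soloB 1, one_pos, fun p => by simp [soloB, bVal], ?_⟩
        exact fire_none_of _ _ one_pos _ 0 (Multiset.zero_le _)
          (by simp [hψ]) (update_zero _ _)
      · have hs := (ψ i).wf s hψ
        have hsval : (ψ i).thrVal = s := by
          rw [RoundPred.thrVal, hψ, Option.getD_some]
        rcases hpres with hU | hM | hlt
        · -- no uni instruction
          have huni : (A.rounds i).uniThr = none := by
            cases hc : (A.rounds i).uniThr with
            | none => rfl
            | some t =>
              exact absurd (show (A.rounds i).uniThr.isSome = true by rw [hc]; rfl) hU
          refine ⟨1, soloB 1, one_pos, fun p => by simp [soloB, bVal], ?_⟩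
          apply fire_none_of _ _ one_pos _ (Multiset.replicate 1 (some bVal))
          · rw [msetOf_soloB]
          · intro u hu
            rw [hψ, Option.mem_some_iff] at hu
            subst hu
            rw [Multiset.card_replicate]
            push_cast
            linarith [hs.2]
          · exact update_replicate_none _ _ _ _ (by rw [huni]; simp)
        · -- no mult instruction
          have hmults : (A.rounds i).mults = [] := not_ne_iff.1 hM
          refine ⟨2, fun p => some p.val, two_pos, fun p => by simp, ?_⟩
          apply fire_none_of _ _ two_pos _ ((Finset.range 2).val.map some)
          · rw [msetOf_valMap]
          · intro u hu
            rw [hψ, Option.mem_some_iff] at hu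
            subst hu
            have hc : Multiset.card ((Finset.range 2).val.map some) = 2 := by
              rw [Multiset.card_map]; exact Finset.card_range 2
            rw [hc]
            push_cast
            linarith [hs.2]
          · exact update_range_none _ _ _ le_rfl (by rw [hmults]; simp)
        · rw [hsval] at hlt
          rcases lt_max_iff.1 hlt with hlt | hlt
          · -- s < thr_u
            set t := A.thrU i with htdef
            have ht0 : 0 ≤ t := le_trans hs.1 hlt.le
            have huni : (A.rounds i).uniThr = some t := Round.uniThr_eq_some ht0
            have ht1 : t < 1 := ((A.rounds i).wfU t (by simp [huni])).2
            have hts : 0 < t - s := sub_pos.2 hlt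
            obtain ⟨n, hn⟩ := exists_nat_gt (1 / (t - s))
            have hn0 : 0 < n := by
              by_contra hc
              push_neg at hc
              interval_cases n
              · simp at hn
                nlinarith [one_div_pos.2 hts]
            have h1 : 1 < (t - s) * n := by
              rw [div_lt_iff₀ hts] at hn
              nlinarith
            set m := Nat.floor (t * n) with hmdef
            have htn0 : (0:ℝ) ≤ t * n := by positivity
            have hm_le : (m : ℝ) ≤ t * n := Nat.floor_le htn0
            have hm_gt : s * n < m := by
              have := Nat.lt_floor_add_one (t * n)
              nlinarith
            have hmn : m ≤ n := by
              have h2 : (m : ℝ) < n := by nlinarith [(Nat.cast_pos (α := ℝ)).2 hn0]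
              exact_mod_cast h2.le
            refine ⟨n, soloB n, hn0, fun p => by simp [soloB, bVal], ?_⟩
            apply fire_none_of _ _ hn0 _ (Multiset.replicate m (some bVal))
            · rw [msetOf_soloB]
              exact (Multiset.replicate_le_replicate _).2 hmn
            · intro u hu
              rw [hψ, Option.mem_some_iff] at hu
              subst hu
              rw [Multiset.card_replicate]
              exact hm_gt
            · apply update_replicate_none
              intro u hu
              rw [huni, Option.mem_some_iff] at hu
              subst hu
              exact not_lt.2 hm_le
          · -- s < thr_m
            set t := A.thrM i with htdef
            have ht0 : 0 ≤ t := le_trans hs.1 hlt.le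
            have hmne : (A.rounds i).mults ≠ [] := by
              intro hnil
              rw [htdef, Algo.thrM, Round.thrM, hnil] at ht0
              norm_num [minThr] at ht0
            have hmem : t ∈ (A.rounds i).mults.map Prod.fst :=
              minThr_mem _ (by simpa using hmne)
            obtain ⟨q, hq, hqt⟩ := List.mem_map.1 hmem
            have hq01 := (A.rounds i).wfM q hq
            have ht1 : t < 1 := hqt ▸ hq01.2
            have hts : 0 < t - s := sub_pos.2 hlt
            have htpos : 0 < t := lt_of_le_of_lt hs.1 hlt
            obtain ⟨n, hn⟩ := exists_nat_gt (max (2 / (t - s)) (2 / t))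
            have hna : 2 / (t - s) < n := lt_of_le_of_lt (le_max_left _ _) hn
            have hnb : 2 / t < n := lt_of_le_of_lt (le_max_right _ _) hn
            have hn0R : (0:ℝ) < n := lt_trans (by positivity) hnb
            have hn0 : 0 < n := by exact_mod_cast hn0R
            have h1 : 2 < (t - s) * n := by
              rw [div_lt_iff₀ hts] at hna
              nlinarith
            have h2 : 2 < t * n := by
              rw [div_lt_iff₀ htpos] at hnb
              nlinarith
            set m := Nat.floor (t * n) with hmdef
            have htn0 : (0:ℝ) ≤ t * n := by positivity
            have hm_le : (m : ℝ) ≤ t * n := Nat.floor_le htn0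
            have hm_gt : s * n < m := by
              have := Nat.lt_floor_add_one (t * n)
              nlinarith
            have hm2 : 2 ≤ m := Nat.le_floor (by exact_mod_cast h2.le)
            have hmn : m ≤ n := by
              have hc : (m : ℝ) < n := by nlinarith
              exact_mod_cast hc.le
            refine ⟨n, fun p => some p.val, hn0, fun p => by simp, ?_⟩
            apply fire_none_of _ _ hn0 _ ((Finset.range m).val.map some)
            · rw [msetOf_valMap]
              exact Multiset.map_le_map (Finset.val_le_iff.2 (Finset.range_subset_range.2 hmn))
            · intro u hu
              rw [hψ, Option.mem_some_iff] at hu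
              subst hu
              have hc : Multiset.card ((Finset.range m).val.map some) = m := by
                rw [Multiset.card_map]; exact Finset.card_range m
              rw [hc]
              exact hm_gt
            · apply update_range_none _ _ _ hm2
              intro q' hq'
              have hle' : t ≤ q'.1 :=
                minThr_le_of_mem _ q'.1 (List.mem_map_of_mem hq')
              refine not_lt.2 (le_trans hm_le ?_)
              exact mul_le_mul_of_nonneg_right hle' (Nat.cast_nonneg n)
    · -- backward direction of the iff
      rintro ⟨n, f, hn, hfree, f', ⟨Hs, hle, ⟨heq, hthr⟩, hupd⟩, p, hp⟩
      by_contra hnp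
      rw [Algo.preserving] at hnp
      push_neg at hnp
      obtain ⟨hU, hM, hmax⟩ := hnp
      obtain ⟨t, huni⟩ := Option.isSome_iff_exists.1 hU
      have htval : A.thrU i = t := by
        rw [Algo.thrU, Round.thrU, huni, Option.getD_some]
      have ht01 := (A.rounds i).wfU t (by simp [huni])
      have htle : t ≤ (ψ i).thrVal :=
        le_trans (htval ▸ le_max_left (A.thrU i) (A.thrM i)) hmax
      have hs0 : 0 ≤ (ψ i).thrVal := le_trans ht01.1 htle
      have hφ : (ψ i).thr = some ((ψ i).thrVal) := RoundPred.thr_eq_some hs0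
      have hcard : (ψ i).thrVal * n < ((Hs p).card : ℝ) :=
        hthr _ (Option.mem_def.2 hφ) p
      have hSc : ((Hs p).filterMap id).card = (Hs p).card := by
        apply card_filterMap_id
        intro x hx
        have hx' : x ∈ msetOf f := Multiset.mem_of_le (hle p) hx
        obtain ⟨q, _, rfl⟩ := Multiset.mem_map.1 hx'
        exact hfree q
      have hS0 : (Hs p).filterMap id ≠ 0 := by
        intro h0
        rw [h0] at hSc
        simp only [Multiset.card_zero] at hSc
        rw [← hSc] at hcard
        have : (0:ℝ) ≤ (ψ i).thrVal * n := mul_nonneg hs0 (Nat.cast_nonneg n)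
        simp at hcard
        linarith
      have hupdnone : (A.rounds i).update n (Hs p) = none := (hupd p).symm.trans hp
      have hfin : ((Hs p).filterMap id).toFinset.Nonempty :=
        Multiset.toFinset_nonempty.2 hS0
      by_cases hc : ((Hs p).filterMap id).toFinset.card = 1
      · have hcond : ∃ u ∈ (A.rounds i).uniThr,
            ((Hs p).filterMap id).toFinset.card = 1 ∧
            u * n < (((Hs p).filterMap id).card : ℝ) := by
          refine ⟨t, by simp [huni], hc, ?_⟩
          rw [hSc]
          exact lt_of_le_of_lt
            (mul_le_mul_of_nonneg_right htle (Nat.cast_nonneg n)) hcard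
        obtain ⟨v, hv⟩ := msMin_isSome hS0
        rw [Round.update, if_pos hcond, hv] at hupdnone
        exact Option.some_ne_none v hupdnone
      · have hc2 : 1 < ((Hs p).filterMap id).toFinset.card :=
          lt_of_le_of_ne hfin.card_pos (Ne.symm hc)
        have hmem : A.thrM i ∈ (A.rounds i).mults.map Prod.fst :=
          minThr_mem _ (by simpa [Algo.hasMult, Round.hasMult] using hM)
        obtain ⟨q, hq, hqt⟩ := List.mem_map.1 hmem
        have hqle : q.1 ≤ (ψ i).thrVal :=
          le_trans (hqt ▸ le_max_right (A.thrU i) (A.thrM i)) hmax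
        have hqlt : q.1 * n < (((Hs p).filterMap id).card : ℝ) := by
          rw [hSc]
          exact lt_of_le_of_lt
            (mul_le_mul_of_nonneg_right hqle (Nat.cast_nonneg n)) hcard
        obtain ⟨v, hv⟩ := firstMult_isSome n _ hS0 hc2 _ ⟨q, hq, hqlt⟩
        have hnoU : ¬ ∃ u ∈ (A.rounds i).uniThr,
            ((Hs p).filterMap id).toFinset.card = 1 ∧
            u * n < (((Hs p).filterMap id).card : ℝ) := by
          rintro ⟨u, -, h1, -⟩
          exact hc h1
        rw [Round.update, if_neg hnoU, hv] at hupdnone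
        exact Option.some_ne_none v hupdnone
  · -- solo-safety
    rintro ⟨h0, h1⟩ n f ⟨Hs, hle, ⟨heq, hthr⟩, hupd⟩
    have huni : (A.rounds i).uniThr = some (A.thrU i) := Round.uniThr_eq_some h0
    have hs0 : 0 ≤ (ψ i).thrVal := le_trans h0 h1
    have hφ : (ψ i).thr = some ((ψ i).thrVal) := RoundPred.thr_eq_some hs0
    funext p
    have hcard : (ψ i).thrVal * n < ((Hs p).card : ℝ) :=
      hthr _ (Option.mem_def.2 hφ) p
    have hrep : Hs p = Multiset.replicate ((Hs p).card) (some bVal) := by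
      apply Multiset.eq_replicate_card.2
      intro b hb
      have hb' : b ∈ msetOf (soloB n) := Multiset.mem_of_le (hle p) hb
      rw [msetOf_soloB] at hb'
      exact Multiset.eq_of_mem_replicate hb'
    have hk0 : 0 < (Hs p).card := by
      by_contra hk
      push_neg at hk
      have hk' : (Hs p).card = 0 := Nat.le_zero.1 hk
      rw [hk'] at hcard
      have : (0:ℝ) ≤ (ψ i).thrVal * n := mul_nonneg hs0 (Nat.cast_nonneg n)
      simp at hcard
      linarith
    have htn : A.thrU i * n < ((Hs p).card : ℝ) :=
      lt_of_le_of_lt (mul_le_mul_of_nonneg_right h1 (Nat.cast_nonneg n)) hcard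
    rw [hupd p, hrep, update_replicate_some _ _ _ _ _ huni hk0 htn]
    rfl

end HO
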